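/- Suppose every unitary matrix V with Vρ_iV† = ρ_i commutes with H. Then the variation in transferred energy is the same for all complete discharge processes: for any two unitaries P and P' such that Pρ_iP† and P'ρ_iP'† are both passive, tr(P†HPHρ_i) = tr(P'†HP'Hρ_i). -/

import Mathlib

open Matrix Kronecker
open scoped ComplexOrder

attribute [local instance] Matrix.frobeniusSeminormedAddCommGroup
  Matrix.frobeniusNormedAddCommGroup Matrix.frobeniusNormedSpace

noncomputable section

namespace QSLPaper

/-- `U` is a unitary matrix. -/
def IsUnitary {ι : Type*} [Fintype ι] [DecidableEq ι] (U : Matrix ι ι ℂ) : Prop :=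
  Uᴴ * U = 1

/-- `ρ` is a density matrix: positive semidefinite with unit trace. -/
def IsDensity {ι : Type*} [Fintype ι] [DecidableEq ι] (ρ : Matrix ι ι ℂ) : Prop :=
  ρ.PosSemidef ∧ ρ.trace = 1

/-- `ρ` is passive relative to the observable `A` and the initial state `ρi`:
`tr(ρA) ≤ tr(VρiV†A)` for every unitary `V`. -/
def IsPassive {ι : Type*} [Fintype ι] [DecidableEq ι] (A ρi ρ : Matrix ι ι ℂ) : Prop :=
  ∀ V : Matrix ι ι ℂ, IsUnitary V → ((ρ * A).trace).re ≤ (((V * ρi * Vᴴ) * A).trace).re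

/-- `ρ` is a passive state: a state (unitary conjugate of `ρi`) which is passive. -/
def IsPassiveState {ι : Type*} [Fintype ι] [DecidableEq ι] (A ρi ρ : Matrix ι ι ℂ) : Prop :=
  (∃ U, IsUnitary U ∧ ρ = U * ρi * Uᴴ) ∧ IsPassive A ρi ρ

/-- `P(ρi)`: the set of unitaries transforming `ρi` into a passive state. -/
def PassivizingSet {ι : Type*} [Fintype ι] [DecidableEq ι] (A ρi : Matrix ι ι ℂ) :
    Set (Matrix ι ι ℂ) :=
  {U | IsUnitary U ∧ IsPassive A ρi (U * ρi * Uᴴ)}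

/-- There is a continuous family of Hermitian Hamiltonians on `[0,τ]` with
`tr(H(t)²) ≤ b` driving `ρ0` (via the von Neumann equation) to a state satisfying `final`
in time `τ`. -/
def ReachesIn {ι : Type*} [Fintype ι] [DecidableEq ι]
    (ρ0 : Matrix ι ι ℂ) (final : Matrix ι ι ℂ → Prop) (b τ : ℝ) : Prop :=
  ∃ H ρ : ℝ → Matrix ι ι ℂ,
    ContinuousOn H (Set.Icc 0 τ) ∧
    (∀ t ∈ Set.Icc (0:ℝ) τ, (H t).IsHermitian) ∧
    (∀ t ∈ Set.Icc (0:ℝ) τ, ((H t * H t).trace).re ≤ b) ∧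
    ρ 0 = ρ0 ∧
    (∀ t ∈ Set.Icc (0:ℝ) τ,
      HasDerivWithinAt ρ ((-Complex.I) • (H t * ρ t - ρ t * H t)) (Set.Icc 0 τ) t) ∧
    final (ρ τ)

/-- The passivization time: the infimum of times in which `ρi` can be driven to a passive
state by a Hamiltonian of bandwidth at most `ω²`. -/
def tauPas {ι : Type*} [Fintype ι] [DecidableEq ι] (A ρi : Matrix ι ι ℂ) (ω : ℝ) : ℝ :=
  sInf {τ | 0 ≤ τ ∧ ReachesIn ρi (IsPassive A ρi) (ω^2) τ}

/-- `e` is an orthonormal family (hence basis) of `ℂⁿ`. -/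
def IsONBasis {n : ℕ} (e : Fin n → (Fin n → ℂ)) : Prop :=
  ∀ j k, star (e j) ⬝ᵥ e k = if j = k then 1 else 0

/-- The discrepancy: given the eigenvalue lists `a` (of `A`), `p` (of `ρi`) and `q`
(of the reference passive state), it is the sum over the distinct eigenvalues `x` of `A`
of the cardinality of the multiset difference `{p k : a k = x} \ {q k : a k = x}`. -/
def discrepancy {n : ℕ} (a p q : Fin n → ℝ) : ℕ := by
  classical
  exact ∑ x ∈ Finset.univ.image a,
    ((((Finset.univ.filter fun k => a k = x)).val.map p)
      - (((Finset.univ.filter fun k => a k = x)).val.map q)).card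

namespace Aux

variable {n : ℕ}

lemma row_one {V : Matrix (Fin n) (Fin n) ℂ} (hV : IsUnitary V) :
    V * Vᴴ = 1 := mul_eq_one_comm.mp hV

lemma col_norm {V : Matrix (Fin n) (Fin n) ℂ} (hV : IsUnitary V) (k : Fin n) :
    ∑ j, Complex.normSq (V j k) = 1 := by
  have h := congrArg (fun M => M k k) hV
  simp only [Matrix.mul_apply, Matrix.one_apply_eq, Matrix.conjTranspose_apply,
    Complex.star_def, ← Complex.normSq_eq_conj_mul_self] at h
  exact_mod_cast h

lemma row_norm {V : Matrix (Fin n) (Fin n) ℂ} (hV : IsUnitary V) (j : Fin n) :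
    ∑ k, Complex.normSq (V j k) = 1 := by
  have h := congrArg (fun M => M j j) (row_one hV)
  simp only [Matrix.mul_apply, Matrix.one_apply_eq, Matrix.conjTranspose_apply,
    Complex.star_def, Complex.mul_conj] at h
  exact_mod_cast h

/-- the column energies -/
def bfun (a : Fin n → ℝ) (V : Matrix (Fin n) (Fin n) ℂ) (k : Fin n) : ℝ :=
  ∑ j, a j * Complex.normSq (V j k)

lemma trace_conj_diag (p a : Fin n → ℝ) (V : Matrix (Fin n) (Fin n) ℂ) :
    (V * diagonal (fun k => (p k : ℂ)) * Vᴴ * diagonal (fun k => (a k : ℂ))).trace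
      = ↑(∑ k, p k * bfun a V k) := by
  have key : ∀ x, (V * diagonal (fun k => (p k : ℂ)) * Vᴴ * diagonal (fun k => (a k : ℂ))) x x
      = ∑ j, ((a x : ℂ) * (p j : ℂ) * (Complex.normSq (V x j) : ℂ)) := by
    intro x
    rw [Matrix.mul_diagonal, Matrix.mul_apply, Finset.sum_mul]
    refine Finset.sum_congr rfl fun j _ => ?_
    simp only [Matrix.mul_diagonal, Matrix.conjTranspose_apply, Complex.star_def,
      ← Complex.mul_conj]
    ring
  have t : (V * diagonal (fun k => (p k : ℂ)) * Vᴴ * diagonal (fun k => (a k : ℂ))).trace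
      = ∑ x, ∑ j, ((a x : ℂ) * (p j : ℂ) * (Complex.normSq (V x j) : ℂ)) :=
    Finset.sum_congr rfl fun x _ => key x
  rw [t, Finset.sum_comm]
  unfold bfun
  push_cast
  refine Finset.sum_congr rfl fun k _ => ?_
  rw [Finset.mul_sum]
  refine Finset.sum_congr rfl fun j _ => ?_
  ring

lemma trace_phi_diag (p a : Fin n → ℝ) (P : Matrix (Fin n) (Fin n) ℂ) :
    (Pᴴ * diagonal (fun k => (a k : ℂ)) * P * diagonal (fun k => (a k : ℂ))
        * diagonal (fun k => (p k : ℂ))).trace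
      = ↑(∑ k, (a k * p k) * bfun a P k) := by
  have key : ∀ x, (Pᴴ * diagonal (fun k => (a k : ℂ)) * P * diagonal (fun k => (a k : ℂ))
        * diagonal (fun k => (p k : ℂ))) x x
      = (∑ j, ((a j : ℂ) * (Complex.normSq (P j x) : ℂ))) * ((a x : ℂ) * (p x : ℂ)) := by
    intro x
    rw [Matrix.mul_diagonal, Matrix.mul_diagonal, Matrix.mul_apply]
    rw [mul_assoc]
    congr 1
    refine Finset.sum_congr rfl fun j _ => ?_
    simp only [Matrix.mul_diagonal, Matrix.conjTranspose_apply, Complex.star_def,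
      Complex.normSq_eq_conj_mul_self]
    push_cast
    ring
  have t : (Pᴴ * diagonal (fun k => (a k : ℂ)) * P * diagonal (fun k => (a k : ℂ))
        * diagonal (fun k => (p k : ℂ))).trace
      = ∑ x, (∑ j, ((a j : ℂ) * (Complex.normSq (P j x) : ℂ))) * ((a x : ℂ) * (p x : ℂ)) :=
    Finset.sum_congr rfl fun x _ => key x
  rw [t]
  unfold bfun
  push_cast
  refine Finset.sum_congr rfl fun k _ => ?_
  ring


/-- the permutation matrix of `τ` -/
def permMat (τ : Equiv.Perm (Fin n)) : Matrix (Fin n) (Fin n) ℂ :=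
  Matrix.of fun j k => if j = τ k then 1 else 0

lemma permMat_unitary (τ : Equiv.Perm (Fin n)) : IsUnitary (permMat τ) := by
  ext k l
  simp only [Matrix.mul_apply, Matrix.conjTranspose_apply, permMat, Matrix.of_apply,
    apply_ite (star : ℂ → ℂ), star_one, star_zero, ite_mul, one_mul, zero_mul,
    Finset.sum_ite_eq', Finset.mem_univ, if_true, Matrix.one_apply,
    EmbeddingLike.apply_eq_iff_eq]

lemma bfun_permMat (a : Fin n → ℝ) (τ : Equiv.Perm (Fin n)) (k : Fin n) :
    bfun a (permMat τ) k = a (τ k) := by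
  unfold bfun permMat
  simp only [Matrix.of_apply, apply_ite Complex.normSq, Complex.normSq_one, Complex.normSq_zero,
    mul_ite, mul_one, mul_zero, Finset.sum_ite_eq', Finset.mem_univ, if_true]

lemma permMat_conj_diagonal (τ : Equiv.Perm (Fin n)) (d : Fin n → ℂ) :
    permMat τ * diagonal d * (permMat τ)ᴴ = diagonal (fun x => d (τ.symm x)) := by
  ext x z
  rw [Matrix.mul_apply]
  have hterm : ∀ y, (permMat τ * diagonal d) x y * (permMat τ)ᴴ y z
      = if y = τ.symm x then (if z = τ y then d y else 0) else 0 := by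
    intro y
    simp only [Matrix.mul_diagonal, Matrix.conjTranspose_apply, permMat, Matrix.of_apply,
      apply_ite (star : ℂ → ℂ), star_one, star_zero, ite_mul, mul_ite, one_mul, zero_mul,
      mul_zero, mul_one]
    by_cases h1 : x = τ y
    · have h2 : y = τ.symm x := by simp [h1]
      rw [if_pos h1, if_pos h2]
    · have h2 : ¬(y = τ.symm x) := fun hc => h1 (by simp [hc])
      rw [if_neg h1, if_neg h2, ite_self]
  rw [Finset.sum_congr rfl fun y _ => hterm y, Finset.sum_ite_eq', if_pos (Finset.mem_univ _)]
  simp only [Equiv.apply_symm_apply]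
  by_cases h : x = z
  · subst h; simp
  · rw [if_neg (fun hc : z = x => h hc.symm), Matrix.diagonal_apply_ne _ h]


/-- extension of a `Fin n`-indexed family to `ℕ`. -/
def extf {n : ℕ} (g : Fin n → ℝ) (i : ℕ) : ℝ := if h : i < n then g ⟨i, h⟩ else 0

lemma extf_apply (g : Fin n → ℝ) {i : ℕ} (h : i < n) : extf g i = g ⟨i, h⟩ := dif_pos h

lemma sum_ext_lt {m : ℕ} (hm : m ≤ n) (f : Fin n → ℝ) :
    ∑ i ∈ Finset.range m, extf f i
      = ∑ i ∈ Finset.univ.filter (fun i : Fin n => (i : ℕ) < m), f i := by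
  unfold extf
  refine Finset.sum_bij' (fun i hi => (⟨i, lt_of_lt_of_le (Finset.mem_range.mp hi) hm⟩ : Fin n))
    (fun k _ => (k : ℕ)) ?_ ?_ ?_ ?_ ?_
  · intro i hi
    simp [Finset.mem_range.mp hi]
  · intro k hk
    simpa using (Finset.mem_filter.mp hk).2
  · intro i hi; rfl
  · intro k hk; simp
  · intro i hi
    rw [dif_pos (lt_of_lt_of_le (Finset.mem_range.mp hi) hm)]

lemma sum_perm_ext (π : Equiv.Perm (Fin n)) (f : Fin n → ℝ) :
    ∑ k, f k = ∑ i ∈ Finset.range n, extf (fun k => f (π k)) i := by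
  unfold extf
  rw [← Fin.sum_univ_eq_sum_range (fun i => if h : i < n then f (π ⟨i, h⟩) else 0) n,
    ← Equiv.sum_comp π f]
  exact Finset.sum_congr rfl fun i _ => by simp [i.isLt]

/-- Ky Fan type lower bound: any `m` columns of a unitary `V` carry at least the sum of
the `m` smallest values of `a`. -/
lemma kyfan (a : Fin n → ℝ) (σ π : Equiv.Perm (Fin n)) (hσ : Monotone (a ∘ σ))
    {V : Matrix (Fin n) (Fin n) ℂ} (hV : IsUnitary V) {m : ℕ} (hm : m ≤ n) :
    ∑ i ∈ Finset.range m, extf (fun k => a (σ k)) i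
      ≤ ∑ i ∈ Finset.range m, extf (fun k => bfun a V (π k)) i := by
  rcases Nat.eq_zero_or_pos m with hm0 | hm1
  · subst hm0; simp
  have hm1n : m - 1 < n := lt_of_lt_of_le (Nat.sub_lt hm1 one_pos) hm
  rw [sum_ext_lt hm (fun i => a (σ i)), sum_ext_lt hm (fun i => bfun a V (π i))]
  set F : Finset (Fin n) := Finset.univ.filter (fun i : Fin n => (i : ℕ) < m) with hF
  set θ : ℝ := a (σ ⟨m - 1, hm1n⟩) with hθ
  set w : Fin n → ℝ := fun j => ∑ i ∈ F, Complex.normSq (V j (π i)) with hw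
  -- RHS as a-weighted column mass
  have hRHS : ∑ i ∈ F, bfun a V (π i) = ∑ j, a j * w j := by
    unfold bfun
    rw [Finset.sum_comm]
    exact Finset.sum_congr rfl fun j _ => by rw [Finset.mul_sum]
  have hw0 : ∀ j, 0 ≤ w j := fun j =>
    Finset.sum_nonneg fun i _ => Complex.normSq_nonneg _
  have hw1 : ∀ j, w j ≤ 1 := by
    intro j
    have himg : w j = ∑ k ∈ F.image π, Complex.normSq (V j k) := by
      show (∑ i ∈ F, Complex.normSq (V j (π i))) = ∑ k ∈ F.image π, Complex.normSq (V j k)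
      rw [Finset.sum_image (fun x _ y _ h => π.injective h)]
    rw [himg, ← row_norm hV j]
    exact Finset.sum_le_sum_of_subset_of_nonneg (Finset.subset_univ _)
      (fun k _ _ => Complex.normSq_nonneg _)
  have hsumw : ∑ j, w j = (F.card : ℝ) := by
    show (∑ j, ∑ i ∈ F, Complex.normSq (V j (π i))) = (F.card : ℝ)
    rw [Finset.sum_comm, Finset.sum_congr rfl (fun i _ => col_norm hV (π i))]
    simp
  set Img : Finset (Fin n) := F.image σ with hImg
  have hcard : Img.card = F.card := Finset.card_image_of_injective F σ.injective
  have hLHS : ∑ i ∈ F, a (σ i) = ∑ k ∈ Img, a k := by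
    rw [hImg, Finset.sum_image (fun x _ y _ h => σ.injective h)]
  have hin : ∀ k ∈ Img, a k ≤ θ := by
    intro k hk
    obtain ⟨i, hi, rfl⟩ := Finset.mem_image.mp hk
    have hi' : (i : ℕ) < m := by simpa [hF] using hi
    have : i ≤ (⟨m - 1, hm1n⟩ : Fin n) := by
      rw [Fin.le_def]
      exact Nat.le_sub_one_of_lt hi'
    exact hσ this
  have hout : ∀ k, k ∉ Img → θ ≤ a k := by
    intro k hk
    have h1 : ¬ ((σ.symm k : ℕ) < m) := by
      intro hlt
      exact hk (Finset.mem_image.mpr ⟨σ.symm k, by simp [hF, hlt], by simp⟩)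
    have h2 : (⟨m - 1, hm1n⟩ : Fin n) ≤ σ.symm k := by
      rw [Fin.le_def]
      exact le_trans (Nat.sub_le m 1) (le_of_not_gt h1)
    have := hσ h2
    simpa using this
  -- the pivot comparison
  have hcompare : ∀ j : Fin n, (if j ∈ Img then a j - θ else 0) ≤ (a j - θ) * w j := by
    intro j
    by_cases hj : j ∈ Img
    · rw [if_pos hj]
      have h1 : a j - θ ≤ 0 := sub_nonpos.mpr (hin j hj)
      have := mul_le_mul_of_nonpos_left (hw1 j) h1
      simpa using this
    · rw [if_neg hj]
      exact mul_nonneg (sub_nonneg.mpr (hout j hj)) (hw0 j)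
  have hsub : ∑ j, (a j - θ) * w j = ∑ j, a j * w j - θ * ∑ j, w j := by
    rw [Finset.mul_sum, ← Finset.sum_sub_distrib]
    exact Finset.sum_congr rfl fun j _ => by ring
  have hitesum : ∑ j, (if j ∈ Img then a j - θ else 0) = ∑ k ∈ Img, (a k - θ) := by
    rw [Finset.sum_ite_mem, Finset.univ_inter]
  have hImgsum : ∑ k ∈ Img, (a k - θ) = ∑ k ∈ Img, a k - θ * Img.card := by
    rw [Finset.sum_sub_distrib, Finset.sum_const, nsmul_eq_mul]
    ring
  have hmain : ∑ k ∈ Img, a k ≤ ∑ j, a j * w j := by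
    have h1 : ∑ j, (if j ∈ Img then a j - θ else 0) ≤ ∑ j, (a j - θ) * w j :=
      Finset.sum_le_sum fun j _ => hcompare j
    rw [hitesum, hImgsum, hsub, hsumw, hcard] at h1
    linarith
  rw [hLHS, hRHS]
  exact hmain


lemma main_diag (hn : 0 < n) (p a : Fin n → ℝ)
    (hpa : ∀ j k : Fin n, p j = p k → a j = a k)
    {P P' : Matrix (Fin n) (Fin n) ℂ} (hP : IsUnitary P) (hP' : IsUnitary P')
    (hpass : ∀ V, IsUnitary V → ∑ k, p k * bfun a P k ≤ ∑ k, p k * bfun a V k)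
    (hpass' : ∀ V, IsUnitary V → ∑ k, p k * bfun a P' k ≤ ∑ k, p k * bfun a V k) :
    ∑ k, (a k * p k) * bfun a P k = ∑ k, (a k * p k) * bfun a P' k := by
  classical
  obtain ⟨σ, hσ⟩ : ∃ σ : Equiv.Perm (Fin n), Monotone (a ∘ σ) :=
    ⟨Tuple.sort a, Tuple.monotone_sort a⟩
  obtain ⟨π, hπ⟩ : ∃ π : Equiv.Perm (Fin n), ∀ i j : Fin n, i ≤ j → p (π j) ≤ p (π i) := by
    refine ⟨Equiv.trans Fin.revPerm (Tuple.sort p), fun i j hij => ?_⟩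
    have h1 : Fin.rev j ≤ Fin.rev i := Fin.rev_le_rev.mpr hij
    have := Tuple.monotone_sort p h1
    simpa [Equiv.trans_apply] using this
  obtain ⟨τ, hτπ⟩ : ∃ τ : Equiv.Perm (Fin n), ∀ i, τ (π i) = σ i :=
    ⟨Equiv.trans π.symm σ, fun i => by simp [Equiv.trans_apply]⟩
  -- summation by parts helper
  have bp : ∀ (f g : ℕ → ℝ), ∑ i ∈ Finset.range n, f i * g i
      = f (n - 1) * (∑ j ∈ Finset.range n, g j)
        - ∑ i ∈ Finset.range (n - 1), (f (i + 1) - f i) * (∑ j ∈ Finset.range (i + 1), g j) := by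
    intro f g
    have := Finset.sum_range_by_parts f g n
    simpa [smul_eq_mul] using this
  -- total mass is spectral invariant
  have hbQ : ∀ (Q : Matrix (Fin n) (Fin n) ℂ), IsUnitary Q →
      ∑ k, bfun a Q k = ∑ j, a j := by
    intro Q hQ
    unfold bfun
    rw [Finset.sum_comm]
    refine Finset.sum_congr rfl fun j _ => ?_
    rw [← Finset.mul_sum, row_norm hQ j, mul_one]
  have hsumae : ∑ i ∈ Finset.range n, extf (fun k => a (σ k)) i = ∑ j, a j :=
    (sum_perm_ext σ a).symm
  have hGn : ∀ (Q : Matrix (Fin n) (Fin n) ℂ), IsUnitary Q →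
      ∑ i ∈ Finset.range n, extf (fun k => bfun a Q (π k)) i
        = ∑ i ∈ Finset.range n, extf (fun k => a (σ k)) i := by
    intro Q hQ
    rw [← sum_perm_ext π (bfun a Q), hbQ Q hQ, hsumae]
  -- energy reindexing
  have hE : ∀ (Q : Matrix (Fin n) (Fin n) ℂ),
      ∑ k, p k * bfun a Q k
        = ∑ i ∈ Finset.range n, extf (fun k => p (π k)) i * extf (fun k => bfun a Q (π k)) i := by
    intro Q
    rw [sum_perm_ext π (fun k => p k * bfun a Q k)]
    refine Finset.sum_congr rfl fun i hi => ?_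
    have h : i < n := Finset.mem_range.mp hi
    simp [extf, h]
  -- energy of the anti-sorting permutation matrix
  have hEV : ∑ k, p k * bfun a (permMat τ) k
      = ∑ i ∈ Finset.range n, extf (fun k => p (π k)) i * extf (fun k => a (σ k)) i := by
    rw [sum_perm_ext π (fun k => p k * bfun a (permMat τ) k)]
    refine Finset.sum_congr rfl fun i hi => ?_
    have h : i < n := Finset.mem_range.mp hi
    simp [extf, h, bfun_permMat, hτπ]
  -- separation: cumulative traces are pinned wherever p has a gap
  have sep : ∀ (Q : Matrix (Fin n) (Fin n) ℂ), IsUnitary Q →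
      (∀ V, IsUnitary V → ∑ k, p k * bfun a Q k ≤ ∑ k, p k * bfun a V k) →
      ∀ i ∈ Finset.range (n - 1),
        (extf (fun k => p (π k)) (i + 1) - extf (fun k => p (π k)) i) *
          ((∑ j ∈ Finset.range (i + 1), extf (fun k => a (σ k)) j)
            - ∑ j ∈ Finset.range (i + 1), extf (fun k => bfun a Q (π k)) j) = 0 := by
    intro Q hQ hpassQ
    have hineq := hpassQ (permMat τ) (permMat_unitary τ)
    rw [hE Q, hEV, bp, bp, hGn Q hQ] at hineq
    have hterm : ∀ i ∈ Finset.range (n - 1),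
        0 ≤ (extf (fun k => p (π k)) (i + 1) - extf (fun k => p (π k)) i) *
          ((∑ j ∈ Finset.range (i + 1), extf (fun k => a (σ k)) j)
            - ∑ j ∈ Finset.range (i + 1), extf (fun k => bfun a Q (π k)) j) := by
      intro i hi
      have hi1 : i + 1 < n := by
        have := Finset.mem_range.mp hi
        omega
      have hin : i < n := by omega
      have hpe_mono : extf (fun k => p (π k)) (i + 1) - extf (fun k => p (π k)) i ≤ 0 := by
        have := hπ ⟨i, hin⟩ ⟨i + 1, hi1⟩ (by simp [Fin.mk_le_mk])
        rw [extf_apply _ hi1, extf_apply _ hin]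
        linarith
      have hky := kyfan a σ π hσ hQ (le_of_lt hi1)
      exact mul_nonneg_of_nonpos_of_nonpos hpe_mono (by linarith)
    have hsum : ∑ i ∈ Finset.range (n - 1),
        (extf (fun k => p (π k)) (i + 1) - extf (fun k => p (π k)) i) *
          ((∑ j ∈ Finset.range (i + 1), extf (fun k => a (σ k)) j)
            - ∑ j ∈ Finset.range (i + 1), extf (fun k => bfun a Q (π k)) j) ≤ 0 := by
      have expand : ∀ i ∈ Finset.range (n - 1),
          (extf (fun k => p (π k)) (i + 1) - extf (fun k => p (π k)) i) *
            ((∑ j ∈ Finset.range (i + 1), extf (fun k => a (σ k)) j)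
              - ∑ j ∈ Finset.range (i + 1), extf (fun k => bfun a Q (π k)) j)
          = (extf (fun k => p (π k)) (i + 1) - extf (fun k => p (π k)) i) * (∑ j ∈ Finset.range (i + 1), extf (fun k => a (σ k)) j)
            - (extf (fun k => p (π k)) (i + 1) - extf (fun k => p (π k)) i)
              * (∑ j ∈ Finset.range (i + 1), extf (fun k => bfun a Q (π k)) j) := by
        intro i _; ring
      rw [Finset.sum_congr rfl expand, Finset.sum_sub_distrib]
      linarith [hineq]
    have htotal := le_antisymm hsum (Finset.sum_nonneg hterm)
    exact fun i hi => (Finset.sum_eq_zero_iff_of_nonneg hterm).mp htotal i hi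
  have sepP := sep P hP hpass
  have sepP' := sep P' hP' hpass'
  -- assemble the target quantity by parts
  have hΦ : ∀ (Q : Matrix (Fin n) (Fin n) ℂ),
      ∑ k, (a k * p k) * bfun a Q k
        = ∑ i ∈ Finset.range n, extf (fun k => a (π k) * p (π k)) i * extf (fun k => bfun a Q (π k)) i := by
    intro Q
    rw [sum_perm_ext π (fun k => (a k * p k) * bfun a Q k)]
    refine Finset.sum_congr rfl fun i hi => ?_
    have h : i < n := Finset.mem_range.mp hi
    simp [extf, h]
  rw [hΦ P, hΦ P']
  rw [bp (extf (fun k => a (π k) * p (π k))) (extf (fun k => bfun a P (π k))),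
      bp (extf (fun k => a (π k) * p (π k))) (extf (fun k => bfun a P' (π k)))]
  rw [hGn P hP, hGn P' hP']
  have hcoeff : ∀ i ∈ Finset.range (n - 1),
      (extf (fun k => a (π k) * p (π k)) (i + 1) - extf (fun k => a (π k) * p (π k)) i)
          * (∑ j ∈ Finset.range (i + 1), extf (fun k => bfun a P (π k)) j)
        = (extf (fun k => a (π k) * p (π k)) (i + 1) - extf (fun k => a (π k) * p (π k)) i)
          * (∑ j ∈ Finset.range (i + 1), extf (fun k => bfun a P' (π k)) j) := by
    intro i hi
    have hi1 : i + 1 < n := by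
      have := Finset.mem_range.mp hi
      omega
    have hin : i < n := by omega
    by_cases hhe_eq : extf (fun k => a (π k) * p (π k)) (i + 1) = extf (fun k => a (π k) * p (π k)) i
    · rw [hhe_eq, sub_self, zero_mul, zero_mul]
    · have hpe_ne : extf (fun k => p (π k)) (i + 1) ≠ extf (fun k => p (π k)) i := by
        intro hc
        apply hhe_eq
        rw [extf_apply _ hi1, extf_apply _ hin] at hc
        have ha_eq := hpa _ _ hc
        rw [extf_apply _ hi1, extf_apply _ hin, hc, ha_eq]
      have h1 := sepP i hi
      have h2 := sepP' i hi
      have hne : extf (fun k => p (π k)) (i + 1) - extf (fun k => p (π k)) i ≠ 0 := fun hc => hpe_ne (by linarith [sub_eq_zero.mp hc])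
      have e1 : (∑ j ∈ Finset.range (i + 1), extf (fun k => a (σ k)) j)
          = ∑ j ∈ Finset.range (i + 1), extf (fun k => bfun a P (π k)) j := by
        rcases mul_eq_zero.mp h1 with h | h
        · exact absurd h hne
        · linarith [sub_eq_zero.mp h]
      have e2 : (∑ j ∈ Finset.range (i + 1), extf (fun k => a (σ k)) j)
          = ∑ j ∈ Finset.range (i + 1), extf (fun k => bfun a P' (π k)) j := by
        rcases mul_eq_zero.mp h2 with h | h
        · exact absurd h hne
        · linarith [sub_eq_zero.mp h]
      rw [← e1, ← e2]
  rw [Finset.sum_congr rfl hcoeff]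

end Aux

open Aux

/-- if every unitary fixing `ρi` under conjugation commutes with `H`, then
the variation in transferred energy is the same for all complete discharge processes:
`tr(P†HPHρi)` does not depend on the passivizing unitary `P`. -/
theorem variance_process_independent
    {n : ℕ} (hn : 1 ≤ n) (H ρi : Matrix (Fin n) (Fin n) ℂ)
    (hH : H.IsHermitian) (hρi : IsDensity ρi) (hcomm : H * ρi = ρi * H)
    (hiso : ∀ V : Matrix (Fin n) (Fin n) ℂ, IsUnitary V → V * ρi * Vᴴ = ρi →
      V * H = H * V) :
    ∀ P P' : Matrix (Fin n) (Fin n) ℂ, IsUnitary P → IsUnitary P' →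
      IsPassive H ρi (P * ρi * Pᴴ) → IsPassive H ρi (P' * ρi * P'ᴴ) →
      (Pᴴ * H * P * H * ρi).trace = (P'ᴴ * H * P' * H * ρi).trace := by
  classical
  intro P P' hP hP' hpassP hpassP'
  have hρ : ρi.IsHermitian := hρi.1.1
  set U : Matrix (Fin n) (Fin n) ℂ := (hρ.eigenvectorUnitary : Matrix (Fin n) (Fin n) ℂ)
    with hUdef
  have hU1 : Uᴴ * U = 1 := by
    have := Matrix.mem_unitaryGroup_iff'.mp hρ.eigenvectorUnitary.2
    simpa [Matrix.star_eq_conjTranspose] using this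
  have hU2 : U * Uᴴ = 1 := mul_eq_one_comm.mp hU1
  have hUU : ∀ X : Matrix (Fin n) (Fin n) ℂ, Uᴴ * (U * X) = X := fun X => by
    rw [← mul_assoc, hU1, one_mul]
  have hUU' : ∀ X : Matrix (Fin n) (Fin n) ℂ, U * (Uᴴ * X) = X := fun X => by
    rw [← mul_assoc, hU2, one_mul]
  set p : Fin n → ℝ := hρ.eigenvalues with hpdef
  have hspec : ρi = U * diagonal (fun k => (p k : ℂ)) * Uᴴ := by
    have := hρ.spectral_theorem
    simp [Matrix.star_eq_conjTranspose, Function.comp] at this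
    rw [this, hUdef, hpdef]
    rfl
  -- every unitary fixing `diagonal p` commutes with `Uᴴ H U`
  have hfix : ∀ W : Matrix (Fin n) (Fin n) ℂ, IsUnitary W →
      W * diagonal (fun k => (p k : ℂ)) * Wᴴ = diagonal (fun k => (p k : ℂ)) →
      W * (Uᴴ * H * U) = (Uᴴ * H * U) * W := by
    intro W hW hWfix
    have hWW : ∀ X, Wᴴ * (W * X) = X := fun X => by rw [← mul_assoc, hW, one_mul]
    have hWfix' : ∀ X, W * (diagonal (fun k => (p k : ℂ)) * (Wᴴ * X))
        = diagonal (fun k => (p k : ℂ)) * X := fun X => by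
      rw [← mul_assoc, ← mul_assoc, hWfix]
    have hVu : IsUnitary (U * W * Uᴴ) := by
      show (U * W * Uᴴ)ᴴ * (U * W * Uᴴ) = 1
      simp only [Matrix.conjTranspose_mul, Matrix.conjTranspose_conjTranspose]
      simp only [mul_assoc, hUU, hWW]
      exact hU2
    have hVfix : (U * W * Uᴴ) * ρi * (U * W * Uᴴ)ᴴ = ρi := by
      rw [hspec]
      simp only [Matrix.conjTranspose_mul, Matrix.conjTranspose_conjTranspose]
      simp only [mul_assoc, hUU, hUU', hWfix']
    have hcom := hiso _ hVu hVfix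
    have key := congrArg (fun M => Uᴴ * (M * U)) hcom
    simp only [mul_assoc, hUU, hUU', hU1, hU2, mul_one, one_mul] at key
    simp only [mul_assoc, hUU, hUU', hU1, hU2, mul_one, one_mul]
    exact key
  -- the transformed Hamiltonian is diagonal with real entries
  have hoff : ∀ j k : Fin n, j ≠ k → (Uᴴ * H * U) j k = 0 := by
    intro j k hjk
    have hW : IsUnitary (diagonal (fun x : Fin n => if x = j then (-1 : ℂ) else 1)) := by
      show _ᴴ * _ = 1
      rw [Matrix.diagonal_conjTranspose, Matrix.diagonal_mul_diagonal]
      ext x y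
      by_cases hxy : x = y
      · subst hxy
        by_cases hx : x = j <;>
          simp [Matrix.diagonal_apply_eq, Matrix.one_apply_eq, hx, Pi.star_apply]
      · simp [Matrix.diagonal_apply_ne _ hxy, Matrix.one_apply_ne hxy]
    have hWfix : diagonal (fun x : Fin n => if x = j then (-1 : ℂ) else 1)
        * diagonal (fun k => (p k : ℂ))
        * (diagonal (fun x : Fin n => if x = j then (-1 : ℂ) else 1))ᴴ
        = diagonal (fun k => (p k : ℂ)) := by
      rw [Matrix.diagonal_conjTranspose, Matrix.diagonal_mul_diagonal,
        Matrix.diagonal_mul_diagonal]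
      ext x y
      by_cases hxy : x = y
      · subst hxy
        by_cases hx : x = j <;> simp [Matrix.diagonal_apply_eq, hx, Pi.star_apply] <;> ring
      · simp [Matrix.diagonal_apply_ne _ hxy]
    have hc := hfix _ hW hWfix
    have hentry := congrFun (congrFun hc j) k
    rw [Matrix.diagonal_mul, Matrix.mul_diagonal] at hentry
    rw [if_pos rfl, if_neg (fun hc' : k = j => hjk hc'.symm)] at hentry
    linear_combination (-1/2 : ℂ) * hentry
  -- the diagonal real entries of the transformed Hamiltonian
  set a : Fin n → ℝ := fun k => ((Uᴴ * H * U) k k).re with hadef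
  have hHtherm : (Uᴴ * H * U).IsHermitian := by
    show (Uᴴ * H * U)ᴴ = Uᴴ * H * U
    simp only [Matrix.conjTranspose_mul, Matrix.conjTranspose_conjTranspose, hH.eq, mul_assoc]
  have hHtd : Uᴴ * H * U = diagonal (fun k => (a k : ℂ)) := by
    ext x y
    by_cases hxy : x = y
    · subst hxy
      rw [Matrix.diagonal_apply_eq]
      have := congrFun (congrFun hHtherm.eq x) x
      rw [Matrix.conjTranspose_apply] at this
      exact (Complex.conj_eq_iff_re.mp this).symm
    · rw [Matrix.diagonal_apply_ne _ hxy]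
      exact hoff x y hxy
  -- equal populations force equal energies
  have hpa : ∀ j k : Fin n, p j = p k → a j = a k := by
    intro j k hpjk
    by_cases hjk : j = k
    · rw [hjk]
    · have hWfix : permMat (Equiv.swap j k) * diagonal (fun x => (p x : ℂ))
          * (permMat (Equiv.swap j k))ᴴ = diagonal (fun x => (p x : ℂ)) := by
        rw [permMat_conj_diagonal]
        have hfun : (fun x => ((p ((Equiv.swap j k).symm x) : ℂ))) = fun x => ((p x : ℂ)) := by
          funext x
          rw [Equiv.symm_swap]
          rcases eq_or_ne x j with rfl | hxj
          · rw [Equiv.swap_apply_left, hpjk]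
          · rcases eq_or_ne x k with rfl | hxk
            · rw [Equiv.swap_apply_right, hpjk]
            · rw [Equiv.swap_apply_of_ne_of_ne hxj hxk]
        rw [hfun]
      have hc := hfix _ (permMat_unitary (Equiv.swap j k)) hWfix
      rw [hHtd] at hc
      have hentry := congrFun (congrFun hc j) k
      rw [Matrix.mul_diagonal, Matrix.diagonal_mul] at hentry
      simp only [permMat, Matrix.of_apply] at hentry
      rw [if_pos (Equiv.swap_apply_right j k).symm] at hentry
      have : ((a k : ℂ)) = ((a j : ℂ)) := by linear_combination hentry
      exact_mod_cast this.symm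
  -- unitarity transfer
  have hPt : IsUnitary (Uᴴ * P * U) := by
    show (Uᴴ * P * U)ᴴ * (Uᴴ * P * U) = 1
    simp only [Matrix.conjTranspose_mul, Matrix.conjTranspose_conjTranspose]
    have hPP : ∀ X, Pᴴ * (P * X) = X := fun X => by rw [← mul_assoc, hP, one_mul]
    simp only [mul_assoc, hUU', hPP]
    exact hU1
  have hPt' : IsUnitary (Uᴴ * P' * U) := by
    show (Uᴴ * P' * U)ᴴ * (Uᴴ * P' * U) = 1
    simp only [Matrix.conjTranspose_mul, Matrix.conjTranspose_conjTranspose]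
    have hPP : ∀ X, P'ᴴ * (P' * X) = X := fun X => by rw [← mul_assoc, hP', one_mul]
    simp only [mul_assoc, hUU', hPP]
    exact hU1
  -- passivity transfer to the diagonal picture
  have htransfer : ∀ Q : Matrix (Fin n) (Fin n) ℂ, IsUnitary Q →
      IsPassive H ρi (Q * ρi * Qᴴ) →
      ∀ V, IsUnitary V → ∑ k, p k * bfun a (Uᴴ * Q * U) k ≤ ∑ k, p k * bfun a V k := by
    intro Q hQ hpassQ V hV
    have hVg : IsUnitary (U * V * Uᴴ) := by
      show (U * V * Uᴴ)ᴴ * (U * V * Uᴴ) = 1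
      simp only [Matrix.conjTranspose_mul, Matrix.conjTranspose_conjTranspose]
      have hVV : ∀ X, Vᴴ * (V * X) = X := fun X => by rw [← mul_assoc, hV, one_mul]
      simp only [mul_assoc, hUU, hVV]
      exact hU2
    have hineq := hpassQ (U * V * Uᴴ) hVg
    -- rewrite both sides as diagonal-picture traces
    have hL : (Q * ρi * Qᴴ * H).trace
        = ((Uᴴ * Q * U) * diagonal (fun k => (p k : ℂ)) * (Uᴴ * Q * U)ᴴ
            * diagonal (fun k => (a k : ℂ))).trace := by
      rw [← hHtd]
      have hmat : (Uᴴ * Q * U) * diagonal (fun k => (p k : ℂ)) * (Uᴴ * Q * U)ᴴ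
          * (Uᴴ * H * U) = Uᴴ * (Q * ρi * Qᴴ * H) * U := by
        rw [hspec]
        simp only [Matrix.conjTranspose_mul, Matrix.conjTranspose_conjTranspose]
        simp only [mul_assoc, hUU, hUU', hU1, hU2, mul_one, one_mul]
      rw [hmat, Matrix.trace_mul_cycle Uᴴ (Q * ρi * Qᴴ * H) U, hU2, one_mul]
    have hR : ((U * V * Uᴴ) * ρi * (U * V * Uᴴ)ᴴ * H).trace
        = (V * diagonal (fun k => (p k : ℂ)) * Vᴴ
            * diagonal (fun k => (a k : ℂ))).trace := by
      rw [← hHtd]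
      have hmat : (U * V * Uᴴ) * ρi * (U * V * Uᴴ)ᴴ * H
          = U * (V * diagonal (fun k => (p k : ℂ)) * Vᴴ * (Uᴴ * H * U)) * Uᴴ := by
        rw [hspec]
        simp only [Matrix.conjTranspose_mul, Matrix.conjTranspose_conjTranspose]
        simp only [mul_assoc, hUU, hUU', hU1, hU2, mul_one, one_mul]
      rw [hmat, Matrix.trace_mul_cycle U
        (V * diagonal (fun k => (p k : ℂ)) * Vᴴ * (Uᴴ * H * U)) Uᴴ, hU1, one_mul]
    rw [hL, hR, trace_conj_diag p a (Uᴴ * Q * U), trace_conj_diag p a V] at hineq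
    rw [Complex.ofReal_re, Complex.ofReal_re] at hineq
    exact hineq
  -- the two sides as real sums
  have hΦside : ∀ Q : Matrix (Fin n) (Fin n) ℂ,
      (Qᴴ * H * Q * H * ρi).trace = ↑(∑ k, (a k * p k) * bfun a (Uᴴ * Q * U) k) := by
    intro Q
    have hmat : (Uᴴ * Q * U)ᴴ * diagonal (fun k => (a k : ℂ)) * (Uᴴ * Q * U)
        * diagonal (fun k => (a k : ℂ)) * diagonal (fun k => (p k : ℂ))
        = Uᴴ * (Qᴴ * H * Q * H * ρi) * U := by
      rw [← hHtd, hspec]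
      simp only [Matrix.conjTranspose_mul, Matrix.conjTranspose_conjTranspose]
      simp only [mul_assoc, hUU, hUU', hU1, hU2, mul_one, one_mul]
    rw [← trace_phi_diag p a (Uᴴ * Q * U), hmat,
      Matrix.trace_mul_cycle Uᴴ (Qᴴ * H * Q * H * ρi) U, hU2, one_mul]
  rw [hΦside P, hΦside P']
  norm_cast
  exact main_diag hn p a hpa hPt hPt'
    (htransfer P hP hpassP) (htransfer P' hP' hpassP')

end QSLPaper
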